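/- (Correctness of the finite-horizon unconstrained DP recursion, Algorithm 4.) Let A (n×n), B (n×m), C (p×n), D (p×m) be real matrices and T ≥ 1 a natural number. Define matrices P[T+1], ..., P[1] and K[T], ..., K[1] backward by P[T+1] = 0 and, for τ = T down to 1, K[τ] = −(Dᵀ D + Bᵀ P[τ+1] B)⁻¹ (Dᵀ C + Bᵀ P[τ+1] A) and P[τ] = (C + D K[τ])ᵀ (C + D K[τ]) + (A + B K[τ])ᵀ P[τ+1] (A + B K[τ]). Assume Dᵀ D + Bᵀ P[τ+1] B is positive definite for every τ. Then for every real n×n matrix X₁: (i) for every choice of controls U[1], ..., U[T] (each m×n) with trajectory X[1] = X₁ and X[τ+1] = A X[τ] + B U[τ], the total cost Σ_{τ=1}^{T} ‖C X[τ] + D U[τ]‖_F² is at least tr(X₁ᵀ P[1] X₁); and (ii) the controls U[τ] = K[τ] X[τ] achieve total cost exactly tr(X₁ᵀ P[1] X₁). -/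

import Mathlib

open Matrix

/-- The squared Frobenius norm: the sum of squares of all entries. -/
def frobSq {a b : ℕ} (M : Matrix (Fin a) (Fin b) ℝ) : ℝ := ∑ i, ∑ j, (M i j) ^ 2

lemma frobSq_eq_trace {a b : ℕ} (M : Matrix (Fin a) (Fin b) ℝ) :
    frobSq M = (Mᵀ * M).trace := by
  simp only [frobSq, Matrix.trace, Matrix.diag, mul_apply, transpose_apply, sq]
  rw [Finset.sum_comm]

lemma diag_trace_nonneg {k : ℕ} (N : Matrix (Fin k) (Fin k) ℝ) (hN : N.PosSemidef) :
    0 ≤ N.trace := by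
  refine Finset.sum_nonneg fun i _ => ?_
  exact hN.diag_nonneg

lemma conj_trace_nonneg {k l : ℕ} (M : Matrix (Fin k) (Fin k) ℝ) (hM : M.PosSemidef)
    (V : Matrix (Fin k) (Fin l) ℝ) : 0 ≤ (Vᵀ * M * V).trace := by
  have h := hM.conjTranspose_mul_mul_same V
  rw [show Vᴴ = Vᵀ from rfl] at h
  exact diag_trace_nonneg _ h

section Aux
variable {n m p : ℕ}
variable (A : Matrix (Fin n) (Fin n) ℝ) (B : Matrix (Fin n) (Fin m) ℝ)
  (C : Matrix (Fin p) (Fin n) ℝ) (D : Matrix (Fin p) (Fin m) ℝ)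
  (P' : Matrix (Fin n) (Fin n) ℝ) (K : Matrix (Fin m) (Fin n) ℝ)

lemma cross_zero (hpd : (Dᵀ * D + Bᵀ * P' * B).PosDef)
    (hK : K = -((Dᵀ * D + Bᵀ * P' * B)⁻¹ * (Dᵀ * C + Bᵀ * P' * A))) :
    Dᵀ * (C + D * K) + Bᵀ * P' * (A + B * K) = 0 := by
  have hdet : IsUnit (Dᵀ * D + Bᵀ * P' * B).det :=
    (Matrix.isUnit_iff_isUnit_det _).1 hpd.isUnit
  have hMK : (Dᵀ * D + Bᵀ * P' * B) * K = -(Dᵀ * C + Bᵀ * P' * A) := by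
    rw [hK, Matrix.mul_neg, ← Matrix.mul_assoc, Matrix.mul_nonsing_inv _ hdet,
      Matrix.one_mul]
  have expand : Dᵀ * (C + D * K) + Bᵀ * P' * (A + B * K)
      = (Dᵀ * C + Bᵀ * P' * A) + (Dᵀ * D + Bᵀ * P' * B) * K := by
    simp only [Matrix.mul_add, Matrix.add_mul, Matrix.mul_assoc]
    abel
  rw [expand, hMK]
  abel

lemma expand_quad (H : Matrix (Fin p) (Fin n) ℝ) (G : Matrix (Fin n) (Fin n) ℝ)
    (X : Matrix (Fin n) (Fin n) ℝ) (V : Matrix (Fin m) (Fin n) ℝ) :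
    (H * X + D * V)ᵀ * (H * X + D * V) + (G * X + B * V)ᵀ * P' * (G * X + B * V)
      = Xᵀ * (Hᵀ * H + Gᵀ * P' * G) * X + Vᵀ * (Dᵀ * D + Bᵀ * P' * B) * V
        + Xᵀ * (Hᵀ * D + Gᵀ * P' * B) * V + Vᵀ * (Dᵀ * H + Bᵀ * P' * G) * X := by
  simp only [Matrix.transpose_add, Matrix.transpose_mul, Matrix.add_mul, Matrix.mul_add,
    Matrix.mul_assoc]
  abel

lemma step_identity (hsym : P'ᵀ = P')
    (hcross : Dᵀ * (C + D * K) + Bᵀ * P' * (A + B * K) = 0)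
    (X : Matrix (Fin n) (Fin n) ℝ) (U : Matrix (Fin m) (Fin n) ℝ) :
    (C * X + D * U)ᵀ * (C * X + D * U) + (A * X + B * U)ᵀ * P' * (A * X + B * U)
      = Xᵀ * ((C + D * K)ᵀ * (C + D * K) + (A + B * K)ᵀ * P' * (A + B * K)) * X
        + (U - K * X)ᵀ * (Dᵀ * D + Bᵀ * P' * B) * (U - K * X) := by
  have hcross' : (C + D * K)ᵀ * D + (A + B * K)ᵀ * P' * B = 0 := by
    have h := congrArg Matrix.transpose hcross
    simp only [Matrix.transpose_add, Matrix.transpose_mul, Matrix.transpose_transpose,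
      Matrix.transpose_zero, hsym] at h
    simpa [Matrix.mul_assoc] using h
  have e1 : C * X + D * U = (C + D * K) * X + D * (U - K * X) := by
    simp only [Matrix.mul_sub, Matrix.add_mul, Matrix.mul_assoc]
    abel
  have e2 : A * X + B * U = (A + B * K) * X + B * (U - K * X) := by
    simp only [Matrix.mul_sub, Matrix.add_mul, Matrix.mul_assoc]
    abel
  rw [e1, e2, expand_quad, hcross, hcross']
  simp [Matrix.mul_add]

end Aux

theorem dp_recursion_correct (n m p T : ℕ) (hT : 1 ≤ T)
    (A : Matrix (Fin n) (Fin n) ℝ) (B : Matrix (Fin n) (Fin m) ℝ)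
    (C : Matrix (Fin p) (Fin n) ℝ) (D : Matrix (Fin p) (Fin m) ℝ)
    (P : ℕ → Matrix (Fin n) (Fin n) ℝ) (K : ℕ → Matrix (Fin m) (Fin n) ℝ)
    (hPT : P (T + 1) = 0)
    (hpd : ∀ τ, 1 ≤ τ → τ ≤ T → (Dᵀ * D + Bᵀ * P (τ + 1) * B).PosDef)
    (hK : ∀ τ, 1 ≤ τ → τ ≤ T →
      K τ = -((Dᵀ * D + Bᵀ * P (τ + 1) * B)⁻¹ * (Dᵀ * C + Bᵀ * P (τ + 1) * A)))
    (hP : ∀ τ, 1 ≤ τ → τ ≤ T →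
      P τ = (C + D * K τ)ᵀ * (C + D * K τ) +
        (A + B * K τ)ᵀ * P (τ + 1) * (A + B * K τ)) :
    ∀ X₁ : Matrix (Fin n) (Fin n) ℝ,
      (∀ (X : ℕ → Matrix (Fin n) (Fin n) ℝ) (U : ℕ → Matrix (Fin m) (Fin n) ℝ),
        X 1 = X₁ →
        (∀ τ, 1 ≤ τ → τ < T → X (τ + 1) = A * X τ + B * U τ) →
        Matrix.trace (X₁ᵀ * P 1 * X₁) ≤
          ∑ τ ∈ Finset.Icc 1 T, frobSq (C * X τ + D * U τ)) ∧
      (∀ (X : ℕ → Matrix (Fin n) (Fin n) ℝ) (U : ℕ → Matrix (Fin m) (Fin n) ℝ),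
        X 1 = X₁ →
        (∀ τ, 1 ≤ τ → τ < T → X (τ + 1) = A * X τ + B * U τ) →
        (∀ τ, 1 ≤ τ → τ ≤ T → U τ = K τ * X τ) →
        ∑ τ ∈ Finset.Icc 1 T, frobSq (C * X τ + D * U τ) =
          Matrix.trace (X₁ᵀ * P 1 * X₁)) := by
  -- symmetry of P along the recursion
  have hsymAux : ∀ j, j ≤ T → (P (T + 1 - j))ᵀ = P (T + 1 - j) := by
    intro j
    induction j with
    | zero => intro _; simp [hPT]
    | succ j ih =>
      intro hj
      have hj' : j ≤ T := Nat.le_of_succ_le hj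
      have h1 : 1 ≤ T - j := by omega
      have h2 : T - j ≤ T := by omega
      rw [show T + 1 - (j + 1) = T - j from by omega, hP (T - j) h1 h2,
        show T - j + 1 = T + 1 - j from by omega]
      have hs := ih hj'
      simp only [Matrix.transpose_add, Matrix.transpose_mul, Matrix.transpose_transpose,
        hs, Matrix.mul_assoc]
  have hsymP : ∀ τ, 1 ≤ τ → τ ≤ T + 1 → (P τ)ᵀ = P τ := by
    intro τ h1 h2
    have h := hsymAux (T + 1 - τ) (by omega)
    rwa [show T + 1 - (T + 1 - τ) = τ from by omega] at h
  intro X₁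
  -- main exact cost identity
  have main : ∀ (X : ℕ → Matrix (Fin n) (Fin n) ℝ) (U : ℕ → Matrix (Fin m) (Fin n) ℝ),
      (∀ s, 1 ≤ s → s < T → X (s + 1) = A * X s + B * U s) →
      ∀ d, d ≤ T →
      ∑ s ∈ Finset.Icc (T + 1 - d) T, frobSq (C * X s + D * U s)
        = ((X (T + 1 - d))ᵀ * P (T + 1 - d) * X (T + 1 - d)).trace
          + ∑ s ∈ Finset.Icc (T + 1 - d) T,
              ((U s - K s * X s)ᵀ * (Dᵀ * D + Bᵀ * P (s + 1) * B)
                * (U s - K s * X s)).trace := by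
    intro X U hdyn d
    induction d with
    | zero =>
      intro _
      rw [show T + 1 - 0 = T + 1 from rfl, Finset.Icc_eq_empty (by omega)]
      simp [hPT]
    | succ d ih =>
      intro hd
      have h1 : 1 ≤ T - d := by omega
      have h2 : T - d ≤ T := by omega
      have hsucc : T - d + 1 = T + 1 - d := by omega
      rw [show T + 1 - (d + 1) = T - d from by omega,
        Finset.Icc_eq_cons_Ioc h2, Finset.sum_cons, Finset.sum_cons,
        ← Finset.Icc_add_one_left_eq_Ioc,
        hsucc, ih (by omega)]
      -- positive definiteness / recursion data at τ = T - d, rephrased with T + 1 - d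
      have hpd' : (Dᵀ * D + Bᵀ * P (T + 1 - d) * B).PosDef := by
        have h := hpd (T - d) h1 h2; rwa [hsucc] at h
      have hK' : K (T - d) = -((Dᵀ * D + Bᵀ * P (T + 1 - d) * B)⁻¹
          * (Dᵀ * C + Bᵀ * P (T + 1 - d) * A)) := by
        have h := hK (T - d) h1 h2; rwa [hsucc] at h
      have hP' : P (T - d) = (C + D * K (T - d))ᵀ * (C + D * K (T - d)) +
          (A + B * K (T - d))ᵀ * P (T + 1 - d) * (A + B * K (T - d)) := by
        have h := hP (T - d) h1 h2; rwa [hsucc] at h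
      have hsym' : (P (T + 1 - d))ᵀ = P (T + 1 - d) := hsymP _ (by omega) (by omega)
      have hmat := step_identity A B C D (P (T + 1 - d)) (K (T - d)) hsym'
        (cross_zero A B C D (P (T + 1 - d)) (K (T - d)) hpd' hK') (X (T - d)) (U (T - d))
      rw [← hP'] at hmat
      have htr := congrArg Matrix.trace hmat
      rw [Matrix.trace_add, Matrix.trace_add] at htr
      have hterm : ((A * X (T - d) + B * U (T - d))ᵀ * P (T + 1 - d)
            * (A * X (T - d) + B * U (T - d))).trace
          = ((X (T + 1 - d))ᵀ * P (T + 1 - d) * X (T + 1 - d)).trace := by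
        rcases eq_or_lt_of_le h2 with heq | hlt
        · rw [show T + 1 - d = T + 1 from by omega, hPT]
          simp
        · rw [← hsucc, hdyn (T - d) h1 hlt]
      rw [frobSq_eq_trace]
      linarith [htr, hterm]
  constructor
  · intro X U hX1 hdyn
    have h := main X U hdyn T le_rfl
    rw [show T + 1 - T = 1 from by omega, hX1] at h
    rw [h]
    have hnn : 0 ≤ ∑ s ∈ Finset.Icc 1 T,
        ((U s - K s * X s)ᵀ * (Dᵀ * D + Bᵀ * P (s + 1) * B) * (U s - K s * X s)).trace := by
      refine Finset.sum_nonneg fun s hs => ?_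
      obtain ⟨hs1, hs2⟩ := Finset.mem_Icc.mp hs
      exact conj_trace_nonneg _ (hpd s hs1 hs2).posSemidef _
    linarith
  · intro X U hX1 hdyn hopt
    have h := main X U hdyn T le_rfl
    rw [show T + 1 - T = 1 from by omega, hX1] at h
    rw [h]
    have hz : ∑ s ∈ Finset.Icc 1 T,
        ((U s - K s * X s)ᵀ * (Dᵀ * D + Bᵀ * P (s + 1) * B) * (U s - K s * X s)).trace = 0 := by
      refine Finset.sum_eq_zero fun s hs => ?_
      obtain ⟨hs1, hs2⟩ := Finset.mem_Icc.mp hs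
      rw [hopt s hs1 hs2]
      simp
    rw [hz, add_zero]
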